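/- arXiv:1308.2363 — 2 statements merged into one kernel-verified Lean document; each statement's English description precedes it below -/
import Mathlib

section
/- Fix 0 ≤ t < 1 and p ∈ ℝ. Suppose q̄ : [t, 1] → ℝ is twice continuously differentiable and satisfies q̄''(s) = q̄(s) + p on (t, 1), q̄(t) = 0, and q̄'(1) + 2(q̄(1) + p) = 0. Then q̄ is the unique minimizer, over all absolutely continuous q : [t, 1] → ℝ with q(t) = 0 and q' ∈ L², of the functional J(q) = ∫ₜ¹ (½|q'(s)|² + ½|q(s) + p|²) ds + |q(1) + p|². -/
open MeasureTheory

theorem stmt_8 (t : ℝ) (ht : 0 ≤ t) (ht1 : t < 1) (p : ℝ)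
    (qb : ℝ → ℝ) (hqb : ContDiff ℝ 2 qb)
    (hode : ∀ s ∈ Set.Ioo t 1, deriv (deriv qb) s = qb s + p)
    (hqbt : qb t = 0) (hqb1 : deriv qb 1 + 2 * (qb 1 + p) = 0) :
    let J : (ℝ → ℝ) → (ℝ → ℝ) → ℝ := fun q q' =>
      (∫ s in t..1, ((1:ℝ)/2 * q' s ^ 2 + (1:ℝ)/2 * (q s + p) ^ 2)) + (q 1 + p) ^ 2
    ∀ (q q' : ℝ → ℝ), q t = 0 →
      (∀ s ∈ Set.Icc t 1, HasDerivAt q (q' s) s) →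
      IntervalIntegrable q' volume t 1 →
      IntervalIntegrable (fun s => q' s ^ 2) volume t 1 →
      J qb (deriv qb) ≤ J q q' ∧
        ((∃ s ∈ Set.Icc t 1, q s ≠ qb s) → J qb (deriv qb) < J q q') := by
  intro J q q' hqt hq hint hintsq
  have ht1' : t ≤ 1 := ht1.le
  have huI : Set.uIcc t 1 = Set.Icc t 1 := Set.uIcc_of_le ht1'
  have hqb_diff : Differentiable ℝ qb := hqb.differentiable (by norm_num)
  have hd_cont : Continuous (deriv qb) := hqb.continuous_deriv (by norm_num)
  have hd_diff : Differentiable ℝ (deriv qb) := by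
    have h2 : ContDiff ℝ (1 + 1) qb := by norm_num at hqb ⊢; exact hqb
    exact ((contDiff_succ_iff_deriv.mp h2).2.2).differentiable (by norm_num)
  have hcq : ContinuousOn q (Set.Icc t 1) := fun s hs =>
    (hq s hs).continuousAt.continuousWithinAt
  have hch : ContinuousOn (fun s => q s - qb s) (Set.Icc t 1) :=
    hcq.sub hqb.continuous.continuousOn
  -- integrability facts
  have i_dq' : IntervalIntegrable (fun s => deriv qb s * q' s) volume t 1 :=
    hint.continuousOn_mul hd_cont.continuousOn
  have i_d2 : IntervalIntegrable (fun s => deriv qb s ^ 2) volume t 1 :=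
    ((hd_cont.pow 2).intervalIntegrable _ _)
  have i_h'2 : IntervalIntegrable (fun s => (q' s - deriv qb s) ^ 2) volume t 1 := by
    have e : (fun s => (q' s - deriv qb s) ^ 2)
        = fun s => q' s ^ 2 - 2 * (deriv qb s * q' s) + deriv qb s ^ 2 := by
      funext s; ring
    rw [e]
    exact (hintsq.sub (i_dq'.const_mul 2)).add i_d2
  have i_h2 : IntervalIntegrable (fun s => (q s - qb s) ^ 2) volume t 1 := by
    apply ContinuousOn.intervalIntegrable; rw [huI]; exact hch.pow 2
  have i_B : IntervalIntegrable
      (fun s => 1/2 * (q' s - deriv qb s) ^ 2 + 1/2 * (q s - qb s) ^ 2) volume t 1 :=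
    (i_h'2.const_mul _).add (i_h2.const_mul _)
  have i_A : IntervalIntegrable
      (fun s => (1:ℝ)/2 * deriv qb s ^ 2 + 1/2 * (qb s + p) ^ 2) volume t 1 := by
    apply Continuous.intervalIntegrable
    exact (continuous_const.mul (hd_cont.pow 2)).add
      (continuous_const.mul ((hqb.continuous.add continuous_const).pow 2))
  have i_C : IntervalIntegrable
      (fun s => deriv qb s * (q' s - deriv qb s) + (qb s + p) * (q s - qb s)) volume t 1 := by
    have e : (fun s => deriv qb s * (q' s - deriv qb s) + (qb s + p) * (q s - qb s))
        = fun s => (deriv qb s * q' s - deriv qb s ^ 2) + (qb s + p) * (q s - qb s) := by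
      funext s; ring
    rw [e]
    refine (i_dq'.sub i_d2).add ?_
    apply ContinuousOn.intervalIntegrable; rw [huI]
    exact (hqb.continuous.continuousOn.add continuousOn_const).mul hch
  -- FTC for the cross term
  have key : (∫ s in t..1, (deriv qb s * (q' s - deriv qb s) + (qb s + p) * (q s - qb s)))
      = deriv qb 1 * (q 1 - qb 1) - deriv qb t * (q t - qb t) := by
    have hcontF : ContinuousOn (fun s => deriv qb s * (q s - qb s)) (Set.Icc t 1) :=
      hd_cont.continuousOn.mul hch
    have hderivF : ∀ x ∈ Set.Ioo t 1, HasDerivAt (fun s => deriv qb s * (q s - qb s))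
        (deriv qb x * (q' x - deriv qb x) + (qb x + p) * (q x - qb x)) x := by
      intro x hx
      have h1 : HasDerivAt (deriv qb) (deriv (deriv qb) x) x := (hd_diff x).hasDerivAt
      have h2 : HasDerivAt (fun s => q s - qb s) (q' x - deriv qb x) x :=
        (hq x (Set.mem_Icc_of_Ioo hx)).sub (hqb_diff x).hasDerivAt
      have h3 := h1.mul h2
      refine h3.congr_deriv ?_
      rw [hode x hx]; ring
    exact intervalIntegral.integral_eq_sub_of_hasDerivAt_of_le ht1' hcontF hderivF i_C
  -- splitting the integral
  have split : (∫ s in t..1, ((1:ℝ)/2 * q' s ^ 2 + 1/2 * (q s + p) ^ 2))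
      = (∫ s in t..1, ((1:ℝ)/2 * deriv qb s ^ 2 + 1/2 * (qb s + p) ^ 2))
        + (∫ s in t..1, (1/2 * (q' s - deriv qb s) ^ 2 + 1/2 * (q s - qb s) ^ 2))
        + ∫ s in t..1, (deriv qb s * (q' s - deriv qb s) + (qb s + p) * (q s - qb s)) := by
    rw [← intervalIntegral.integral_add i_A i_B,
      ← intervalIntegral.integral_add (i_A.add i_B) i_C]
    apply intervalIntegral.integral_congr
    intro s _; ring
  have hd1 : deriv qb 1 = -(2 * (qb 1 + p)) := by linarith
  have main : (∫ s in t..1, ((1:ℝ)/2 * q' s ^ 2 + 1/2 * (q s + p) ^ 2)) + (q 1 + p) ^ 2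
      = ((∫ s in t..1, ((1:ℝ)/2 * deriv qb s ^ 2 + 1/2 * (qb s + p) ^ 2)) + (qb 1 + p) ^ 2)
        + ((∫ s in t..1, (1/2 * (q' s - deriv qb s) ^ 2 + 1/2 * (q s - qb s) ^ 2))
           + (q 1 - qb 1) ^ 2) := by
    rw [split, key, hqt, hqbt, hd1]; ring
  have hB_nonneg : 0 ≤ ∫ s in t..1, (1/2 * (q' s - deriv qb s) ^ 2 + 1/2 * (q s - qb s) ^ 2) :=
    intervalIntegral.integral_nonneg ht1' (fun u _ => by positivity)
  constructor
  · show (∫ s in t..1, ((1:ℝ)/2 * deriv qb s ^ 2 + 1/2 * (qb s + p) ^ 2)) + (qb 1 + p) ^ 2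
      ≤ (∫ s in t..1, ((1:ℝ)/2 * q' s ^ 2 + 1/2 * (q s + p) ^ 2)) + (q 1 + p) ^ 2
    linarith [main, hB_nonneg, sq_nonneg (q 1 - qb 1)]
  · rintro ⟨s0, hs0, hne⟩
    show (∫ s in t..1, ((1:ℝ)/2 * deriv qb s ^ 2 + 1/2 * (qb s + p) ^ 2)) + (qb 1 + p) ^ 2
      < (∫ s in t..1, ((1:ℝ)/2 * q' s ^ 2 + 1/2 * (q s + p) ^ 2)) + (q 1 + p) ^ 2
    by_cases h1eq : q 1 = qb 1
    · -- then s0 is an interior point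
      have hs0t : t < s0 := by
        rcases eq_or_lt_of_le hs0.1 with h | h
        · exact absurd (by rw [← h, hqt, hqbt]) hne
        · exact h
      have hs01 : s0 < 1 := by
        rcases eq_or_lt_of_le hs0.2 with h | h
        · exact absurd (by rw [h, h1eq]) hne
        · exact h
      -- the squared difference is positive near s0
      have hfc : ContinuousAt (fun s => (q s - qb s) ^ 2) s0 := by
        have : Set.Icc t 1 ∈ nhds s0 := Icc_mem_nhds hs0t hs01
        exact (hch.pow 2).continuousAt this
      have hfpos : 0 < (q s0 - qb s0) ^ 2 := by
        have := sub_ne_zero.mpr hne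
        positivity
      have hev : {s : ℝ | 0 < (q s - qb s) ^ 2} ∩ Set.Ioo t 1 ∈ nhds s0 :=
        Filter.inter_mem (hfc.eventually (eventually_gt_nhds hfpos))
          (Ioo_mem_nhds hs0t hs01)
      obtain ⟨ε, hε, hball⟩ := Metric.mem_nhds_iff.mp hev
      set a := s0 - ε/2 with ha
      set b := s0 + ε/2 with hb
      have hab : a < b := by rw [ha, hb]; linarith
      have hsub : Set.Icc a b ⊆ {s : ℝ | 0 < (q s - qb s) ^ 2} ∩ Set.Ioo t 1 := by
        refine fun x hx => hball ?_
        rw [Metric.mem_ball, Real.dist_eq, abs_sub_lt_iff]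
        rw [ha] at hx; rw [hb] at hx
        exact ⟨by linarith [hx.2], by linarith [hx.1]⟩
      have haI : a ∈ Set.Ioo t 1 := (hsub ⟨le_refl a, hab.le⟩).2
      have hbI : b ∈ Set.Ioo t 1 := (hsub ⟨hab.le, le_refl b⟩).2
      have hsubI : ∀ (c d : ℝ), t ≤ c → d ≤ 1 → c ≤ d →
          IntervalIntegrable (fun s => (q s - qb s) ^ 2) volume c d := by
        intro c d hc hd hcd
        refine i_h2.mono_set ?_
        rw [Set.uIcc_of_le hcd, huI]
        exact Set.Icc_subset_Icc hc hd
      have iab := hsubI a b haI.1.le hbI.2.le hab.le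
      have ita := hsubI t a le_rfl haI.2.le haI.1.le
      have ib1 := hsubI b 1 hbI.1.le le_rfl hbI.2.le
      have ia1 := hsubI a 1 haI.1.le le_rfl haI.2.le
      have hposab : 0 < ∫ s in a..b, (q s - qb s) ^ 2 :=
        intervalIntegral.intervalIntegral_pos_of_pos_on iab
          (fun x hx => (hsub (Set.Ioo_subset_Icc_self hx)).1) hab
      have e1 : (∫ s in t..1, (q s - qb s) ^ 2)
          = (∫ s in t..a, (q s - qb s) ^ 2) + ∫ s in a..1, (q s - qb s) ^ 2 :=
        (intervalIntegral.integral_add_adjacent_intervals ita ia1).symm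
      have e2 : (∫ s in a..1, (q s - qb s) ^ 2)
          = (∫ s in a..b, (q s - qb s) ^ 2) + ∫ s in b..1, (q s - qb s) ^ 2 :=
        (intervalIntegral.integral_add_adjacent_intervals iab ib1).symm
      have nta : 0 ≤ ∫ s in t..a, (q s - qb s) ^ 2 :=
        intervalIntegral.integral_nonneg haI.1.le (fun u _ => sq_nonneg _)
      have nb1 : 0 ≤ ∫ s in b..1, (q s - qb s) ^ 2 :=
        intervalIntegral.integral_nonneg hbI.2.le (fun u _ => sq_nonneg _)
      have hIpos : 0 < ∫ s in t..1, (q s - qb s) ^ 2 := by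
        rw [e1, e2]; linarith
      have eB : (∫ s in t..1, (1/2 * (q' s - deriv qb s) ^ 2 + 1/2 * (q s - qb s) ^ 2))
          = (∫ s in t..1, 1/2 * (q' s - deriv qb s) ^ 2)
            + ∫ s in t..1, 1/2 * (q s - qb s) ^ 2 :=
        intervalIntegral.integral_add (i_h'2.const_mul _) (i_h2.const_mul _)
      have n1 : 0 ≤ ∫ s in t..1, 1/2 * (q' s - deriv qb s) ^ 2 :=
        intervalIntegral.integral_nonneg ht1' (fun u _ => by positivity)
      have e3 : (∫ s in t..1, 1/2 * (q s - qb s) ^ 2)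
          = 1/2 * ∫ s in t..1, (q s - qb s) ^ 2 :=
        intervalIntegral.integral_const_mul _ _
      have hBpos : 0 < ∫ s in t..1, (1/2 * (q' s - deriv qb s) ^ 2 + 1/2 * (q s - qb s) ^ 2) := by
        rw [eB, e3]; linarith
      linarith [main, hBpos, sq_nonneg (q 1 - qb 1)]
    · -- boundary term strictly positive
      have hpos : 0 < (q 1 - qb 1) ^ 2 := by
        have := sub_ne_zero.mpr h1eq
        positivity
      linarith [main, hB_nonneg, hpos]
end

section
/- Let U : ℝ → ℝ be bounded and measurable, let μ be a finite measure on ℝ, let g : ℝ → ℝ be bounded, and fix T > 0. Suppose u₁, u₂ : [0, T] × ℝ → ℝ are bounded, measurable in p, differentiable in t, and both satisfy ∂u/∂t(t,p) = −U(p)u(t,p) + ∫_ℝ (u(t, p + k) − u(t, p)) μ(dk) with u(0, p) = g(p). Then u₁ = u₂ on [0, T] × ℝ. -/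
open MeasureTheory

theorem stmt_15 (U : ℝ → ℝ) (hUm : Measurable U) (CU : ℝ) (hU : ∀ p, |U p| ≤ CU)
    (μ : Measure ℝ) [IsFiniteMeasure μ] (g : ℝ → ℝ) (Cg : ℝ) (hg : ∀ p, |g p| ≤ Cg)
    (T : ℝ) (hT : 0 < T) (u₁ u₂ : ℝ → ℝ → ℝ)
    (C : ℝ) (hb1 : ∀ t p, |u₁ t p| ≤ C) (hb2 : ∀ t p, |u₂ t p| ≤ C)
    (hm1 : ∀ t, Measurable (u₁ t)) (hm2 : ∀ t, Measurable (u₂ t))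
    (hpde1 : ∀ p : ℝ, ∀ t ∈ Set.Icc (0:ℝ) T, HasDerivAt (fun t => u₁ t p)
      (-(U p) * u₁ t p + ∫ k, (u₁ t (p + k) - u₁ t p) ∂μ) t)
    (hpde2 : ∀ p : ℝ, ∀ t ∈ Set.Icc (0:ℝ) T, HasDerivAt (fun t => u₂ t p)
      (-(U p) * u₂ t p + ∫ k, (u₂ t (p + k) - u₂ t p) ∂μ) t)
    (h01 : ∀ p, u₁ 0 p = g p) (h02 : ∀ p, u₂ 0 p = g p) :
    ∀ t ∈ Set.Icc (0:ℝ) T, ∀ p, u₁ t p = u₂ t p := by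
  set M := (μ Set.univ).toReal with hM
  have hM0 : 0 ≤ M := ENNReal.toReal_nonneg
  have hC0 : 0 ≤ C := (abs_nonneg _).trans (hb1 0 0)
  have hCU0 : 0 ≤ CU := (abs_nonneg _).trans (hU 0)
  set K := CU + 2 * M with hK
  have hK0 : 0 ≤ K := by positivity
  set v : ℝ → ℝ → ℝ := fun t p => u₁ t p - u₂ t p with hv
  have hint : ∀ (u : ℝ → ℝ → ℝ), (∀ t, Measurable (u t)) → (∀ t p, |u t p| ≤ C) →
      ∀ s p, Integrable (fun k => u s (p + k) - u s p) μ := by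
    intro u hm hb s p
    refine ⟨(((hm s).comp (measurable_const_add p)).sub measurable_const).aestronglyMeasurable,
      HasFiniteIntegral.of_bounded (C := 2 * C) ?_⟩
    filter_upwards with k
    have h1 := hb s (p + k); have h2 := hb s p
    have : |u s (p + k) - u s p| ≤ |u s (p + k)| + |u s p| := abs_sub _ _
    simp only [Real.norm_eq_abs]
    linarith
  have key : ∀ n : ℕ, ∀ p, ∀ t ∈ Set.Icc (0:ℝ) T,
      |v t p| ≤ 2 * C * (K * t) ^ n / n.factorial := by
    intro n
    induction n with
    | zero =>
      intro p t ht
      have h1 := hb1 t p; have h2 := hb2 t p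
      have : |v t p| ≤ |u₁ t p| + |u₂ t p| := abs_sub _ _
      simp only [pow_zero, Nat.factorial_zero, Nat.cast_one, mul_one, div_one]
      linarith
    | succ n ih =>
      intro p t ht
      set D : ℝ → ℝ := fun s => -(U p) * v s p + ∫ k, (v s (p + k) - v s p) ∂μ with hD
      have hderiv : ∀ s ∈ Set.Icc (0:ℝ) T, HasDerivAt (fun s => v s p) (D s) s := by
        intro s hs
        have h12 := (hpde1 p s hs).sub (hpde2 p s hs)
        convert h12 using 1
        · rfl
        · rfl
        · rfl
        have hsub : (∫ k, (v s (p + k) - v s p) ∂μ)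
            = (∫ k, (u₁ s (p + k) - u₁ s p) ∂μ) - ∫ k, (u₂ s (p + k) - u₂ s p) ∂μ := by
          rw [← integral_sub (hint u₁ hm1 hb1 s p) (hint u₂ hm2 hb2 s p)]
          congr 1; funext k; simp only [hv]; ring
        rw [show D s = -U p * v s p + ∫ k, (v s (p + k) - v s p) ∂μ from rfl, hsub]
        simp only [hv]
        ring
      set B : ℝ → ℝ := fun s => 2 * C * (K * s) ^ (n + 1) / (n + 1).factorial with hB
      have hB' : ∀ x : ℝ, HasDerivAt B (2 * C * K * (K * x) ^ n / n.factorial) x := by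
        intro x
        have h0 : HasDerivAt (fun s : ℝ => K * s) K x := by
          simpa using (hasDerivAt_id x).const_mul K
        have h1 := ((h0.pow (n + 1)).const_mul (2 * C)).div_const ((n + 1).factorial : ℝ)
        convert h1 using 1
        · rfl
        · rfl
        · rfl
        have hnf : ((n + 1).factorial : ℝ) = (n + 1) * n.factorial := by
          rw [Nat.factorial_succ]; push_cast; ring
        rw [hnf]
        have hfn : (n.factorial : ℝ) ≠ 0 := Nat.cast_ne_zero.mpr n.factorial_ne_zero
        have hn1 : ((n : ℝ) + 1) ≠ 0 := by positivity
        simp only [Nat.add_sub_cancel, Nat.cast_add, Nat.cast_one]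
        field_simp
      have bound : ∀ x ∈ Set.Ico (0:ℝ) T, ‖D x‖ ≤ 2 * C * K * (K * x) ^ n / n.factorial := by
        intro x hx
        have hxI : x ∈ Set.Icc (0:ℝ) T := Set.Ico_subset_Icc_self hx
        set Bn := 2 * C * (K * x) ^ n / n.factorial with hBn
        have hBn0 : 0 ≤ Bn := by
          have h1 : 0 ≤ (K * x) ^ n := pow_nonneg (mul_nonneg hK0 hx.1) n
          exact div_nonneg (mul_nonneg (by linarith) h1) (Nat.cast_nonneg _)
        have ihx : ∀ q, |v x q| ≤ Bn := fun q => ih q x hxI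
        have h1 : |(-(U p)) * v x p| ≤ CU * Bn := by
          rw [abs_mul, abs_neg]
          exact mul_le_mul (hU p) (ihx p) (abs_nonneg _) hCU0
        have hbd : ∀ᵐ k ∂μ, ‖v x (p + k) - v x p‖ ≤ 2 * Bn := by
          filter_upwards with k
          have ha := ihx (p + k); have hb := ihx p
          have : |v x (p + k) - v x p| ≤ |v x (p + k)| + |v x p| := abs_sub _ _
          simp only [Real.norm_eq_abs]; linarith
        have h2 : |∫ k, (v x (p + k) - v x p) ∂μ| ≤ M * (2 * Bn) := by
          have h := norm_integral_le_of_norm_le (integrable_const (2 * Bn)) hbd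
          rw [integral_const, smul_eq_mul, Real.norm_eq_abs] at h
          exact h
        rw [Real.norm_eq_abs]
        calc |D x| ≤ |(-(U p)) * v x p| + |∫ k, (v x (p + k) - v x p) ∂μ| :=
              abs_add_le ((-(U p)) * v x p) _
          _ ≤ CU * Bn + M * (2 * Bn) := add_le_add h1 h2
          _ = K * Bn := by rw [hK]; ring
          _ = 2 * C * K * (K * x) ^ n / n.factorial := by rw [hBn]; ring
      have hcont : ContinuousOn (fun s => v s p) (Set.Icc 0 T) :=
        fun s hs => (hderiv s hs).continuousAt.continuousWithinAt
      have hderiv' : ∀ x ∈ Set.Ico (0:ℝ) T,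
          HasDerivWithinAt (fun s => v s p) (D x) (Set.Ici x) x :=
        fun x hx => (hderiv x (Set.Ico_subset_Icc_self hx)).hasDerivWithinAt
      have h0 : ‖v 0 p‖ ≤ B 0 := by
        simp [hv, hB, h01 p, h02 p, (Nat.succ_ne_zero n)]
      have := image_norm_le_of_norm_deriv_right_le_deriv_boundary hcont hderiv' h0 hB' bound ht
      simpa [hB, Real.norm_eq_abs] using this
  intro t ht p
  have htd : Filter.Tendsto (fun n : ℕ => 2 * C * ((K * t) ^ n / n.factorial))
      Filter.atTop (nhds 0) := by
    have := (FloorSemiring.tendsto_pow_div_factorial_atTop (K * t)).const_mul (2 * C)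
    simpa using this
  have hle : |v t p| ≤ 0 := by
    refine ge_of_tendsto' htd fun n => ?_
    have := key n p t ht
    linarith [this, (mul_div_assoc (2 * C) ((K * t) ^ n) (n.factorial : ℝ))]
  have : v t p = 0 := abs_eq_zero.mp (le_antisymm hle (abs_nonneg _))
  have := sub_eq_zero.mp this
  exact this
end
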